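/- For every integer N ≥ 1 there exists a constant C(N) > 0 such that for every polynomial endomorphism F : ℤ^N → ℤ^N over ℤ and every F-periodic point P ∈ ℤ^N, the primitive period of P is at most C(N). -/

import Mathlib

open MvPolynomial Function Matrix


lemma dvd_eval_sub {N : ℕ} (q : ℤ) (p : MvPolynomial (Fin N) ℤ) (x y : Fin N → ℤ)
    (h : ∀ i, q ∣ x i - y i) : q ∣ eval x p - eval y p := by
  induction p using MvPolynomial.induction_on with
  | C a => simp
  | add p₁ p₂ h₁ h₂ =>
      have e : eval x (p₁ + p₂) - eval y (p₁ + p₂)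
          = (eval x p₁ - eval y p₁) + (eval x p₂ - eval y p₂) := by
        simp [eval_add]; ring
      rw [e]; exact dvd_add h₁ h₂
  | mul_X p i hp =>
      have e : eval x (p * X i) - eval y (p * X i)
          = x i * (eval x p - eval y p) + eval y p * (x i - y i) := by
        simp [eval_mul, eval_X]; ring
      rw [e]
      exact dvd_add (Dvd.dvd.mul_left hp _) (Dvd.dvd.mul_left (h i) _)

-- LEM B : Taylor congruence
lemma taylor_cong {N : ℕ} (k : ℕ) (P x y : Fin N → ℤ)
    (hxy : ∀ i, (3:ℤ)^k ∣ x i - y i) (hx : ∀ i, (27:ℤ) ∣ x i - P i)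
    (hy : ∀ i, (27:ℤ) ∣ y i - P i) (p : MvPolynomial (Fin N) ℤ) :
    (3:ℤ)^(k+3) ∣ (eval x p - eval y p - ∑ j, eval P (pderiv j p) * (x j - y j)) := by
  have h27 : ((3:ℤ)^(k+3)) = 27 * 3^k := by ring
  induction p using MvPolynomial.induction_on with
  | C a => simp
  | add p₁ p₂ h₁ h₂ =>
      have e : (eval x (p₁+p₂) - eval y (p₁+p₂) - ∑ j, eval P (pderiv j (p₁+p₂)) * (x j - y j))
          = (eval x p₁ - eval y p₁ - ∑ j, eval P (pderiv j p₁) * (x j - y j))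
            + (eval x p₂ - eval y p₂ - ∑ j, eval P (pderiv j p₂) * (x j - y j)) := by
        simp [eval_add, map_add, add_mul, Finset.sum_add_distrib]; ring
      rw [e]; exact dvd_add h₁ h₂
  | mul_X p i hp =>
      have hS : ∀ j, eval P (pderiv j (p * X i)) =
          eval P p * (if j = i then 1 else 0) + eval P (pderiv j p) * P i := by
        intro j
        rw [pderiv_mul]
        rcases eq_or_ne j i with h | h
        · subst h; simp [pderiv_X_self]; ring
        · simp [pderiv_X, h]
      have hsum : ∑ j, eval P (pderiv j (p * X i)) * (x j - y j)
          = eval P p * (x i - y i) + P i * ∑ j, eval P (pderiv j p) * (x j - y j) := by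
        simp only [hS, add_mul]
        rw [Finset.sum_add_distrib]
        congr 1
        · rw [Finset.sum_eq_single i]
          · simp
          · intro b _ hb; simp [hb]
          · intro hb; simp at hb
        · rw [Finset.mul_sum]; congr 1; ext j; ring
      set S := ∑ j, eval P (pderiv j p) * (x j - y j) with hSdef
      have e : eval x (p * X i) - eval y (p * X i)
            - ∑ j, eval P (pderiv j (p * X i)) * (x j - y j)
          = x i * (eval x p - eval y p - S) + (x i - P i) * S
            + (eval y p - eval P p) * (x i - y i) := by
        rw [hsum]; simp [eval_mul, eval_X]; ring
      rw [e]
      have d1 : (3:ℤ)^(k+3) ∣ x i * (eval x p - eval y p - S) := Dvd.dvd.mul_left hp _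
      have dS : (3:ℤ)^k ∣ S := by
        apply Finset.dvd_sum
        intro j _
        exact Dvd.dvd.mul_left (hxy j) _
      have d2 : (3:ℤ)^(k+3) ∣ (x i - P i) * S := by
        rw [h27]; exact mul_dvd_mul (hx i) dS
      have d3 : (3:ℤ)^(k+3) ∣ (eval y p - eval P p) * (x i - y i) := by
        rw [h27]
        exact mul_dvd_mul (dvd_eval_sub 27 p y P hy) (hxy i)
      exact dvd_add (dvd_add d1 d2) d3


private lemma absorb_aux {M : Type*} [Monoid M] (x : M) {i r c t : ℕ}
    (hir : x ^ (i + r) = x ^ i) (hrpos : 0 < r) (hic : i ≤ c) (hrc : r ∣ c)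
    (ht : 1 ≤ t) : x ^ (c * t) = x ^ c := by
  -- first: ∀ a ≥ i, ∀ s, r ∣ s → x^(a+s) = x^a
  have key : ∀ l a, i ≤ a → x ^ (a + r * l) = x ^ a := by
    intro l
    induction l with
    | zero => intro a _; simp
    | succ l ih =>
        intro a ha
        have : a + r * (l + 1) = (a + r * l) + r := by ring
        rw [this]
        have h1 : x ^ ((a + r * l) + r) = x ^ ((a + r * l - i) + (i + r)) := by
          congr 1; omega
        rw [h1, pow_add, hir, ← pow_add]
        have h2 : a + r * l - i + i = a + r * l := by omega
        rw [h2, ih a ha]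
  obtain ⟨d, hd⟩ := hrc
  have : c * t = c + r * (d * (t - 1)) := by
    have : c * t = c + c * (t-1) := by
      cases t with
      | zero => omega
      | succ t' => simp [Nat.mul_succ, Nat.succ_sub_one]; ring
    rw [this, hd]; ring
  rw [this, key _ c hic]

lemma pow_factorial_absorb {M : Type*} [Monoid M] [Fintype M] [DecidableEq M] (x : M)
    {t : ℕ} (ht : 1 ≤ t) :
    x ^ ((Fintype.card M).factorial * t) = x ^ (Fintype.card M).factorial := by
  set D := Fintype.card M with hD
  have hcard : Fintype.card M < Fintype.card (Fin (D+1)) := by simp [hD]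
  obtain ⟨a, b, hab, heq⟩ := Fintype.exists_ne_map_eq_of_card_lt
    (fun i : Fin (D+1) => x ^ ((i : ℕ) + 1)) hcard
  have habne : (a:ℕ) ≠ (b:ℕ) := fun h => hab (Fin.ext h)
  have main : ∀ (u v : Fin (D+1)), (u:ℕ) < (v:ℕ) → x ^ ((u:ℕ)+1) = x ^ ((v:ℕ)+1) →
      x ^ (D.factorial * t) = x ^ D.factorial := by
    intro u v huv he
    have hDpos : 0 < D := by
      by_contra h
      push_neg at h
      interval_cases D
      · omega
    refine absorb_aux x (i := (u:ℕ)+1) (r := (v:ℕ) - (u:ℕ)) ?_ (by omega) ?_ ?_ ht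
    · have : (u:ℕ) + 1 + ((v:ℕ) - (u:ℕ)) = (v:ℕ) + 1 := by omega
      rw [this, he]
    · calc (u:ℕ) + 1 ≤ D := by omega
        _ ≤ D.factorial := Nat.self_le_factorial D
    · exact Nat.dvd_factorial (by omega) (by omega)
  rcases Nat.lt_or_ge (a:ℕ) (b:ℕ) with h | h
  · exact main a b h heq
  · exact main b a (by omega) heq.symm

-- idempotent powers
lemma idem_pow {M : Type*} [Monoid M] {u : M} (hu : u * u = u) {j : ℕ} (hj : 1 ≤ j) :
    u ^ j = u := by
  induction j with
  | zero => omega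
  | succ j ih =>
      cases Nat.eq_or_lt_of_le hj with
      | inl h => simp [← h]
      | inr h =>
          rw [pow_succ, ih (by omega), hu]


-- cast-eval commute
lemma cast_eval_comm {N : ℕ} (p : MvPolynomial (Fin N) ℤ) (x : Fin N → ℤ) :
    ((eval x p : ℤ) : ZMod 27)
      = eval (fun i => ((x i : ℤ) : ZMod 27)) (map (Int.castRingHom (ZMod 27)) p) := by
  rw [eval_map]
  have h := MvPolynomial.eval₂_comp_left (Int.castRingHom (ZMod 27)) (RingHom.id ℤ) x p
  simp only [MvPolynomial.eval, coe_eval₂Hom] at *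
  simpa [Function.comp_def] using h

-- minimal period ≤ card for periodic point in a fintype
lemma minper_le_card {α : Type*} [Fintype α] [DecidableEq α] (σ : α → α) (x : α)
    {n : ℕ} (hn : 0 < n) (hx : σ^[n] x = x) :
    Function.minimalPeriod σ x ≤ Fintype.card α := by
  set D := Fintype.card α with hD
  have hper : Function.IsPeriodicPt σ n x := hx
  have hcard : Fintype.card α < Fintype.card (Fin (D+1)) := by simp [hD]
  obtain ⟨a, b, hab, heq⟩ := Fintype.exists_ne_map_eq_of_card_lt
    (fun i : Fin (D+1) => σ^[(i:ℕ)] x) hcard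
  have habne : (a:ℕ) ≠ (b:ℕ) := fun h => hab (Fin.ext h)
  have main : ∀ (u v : Fin (D+1)), (u:ℕ) < (v:ℕ) → σ^[(u:ℕ)] x = σ^[(v:ℕ)] x →
      Function.minimalPeriod σ x ≤ D := by
    intro u v huv he
    have h1 : Function.IsPeriodicPt σ (n * (v:ℕ)) x := hper.mul_const _
    have h2 : Function.IsPeriodicPt σ ((n-1) * (v:ℕ) + (u:ℕ)) x := by
      unfold Function.IsPeriodicPt Function.IsFixedPt
      have : σ^[(n-1) * (v:ℕ) + (u:ℕ)] x = σ^[(n-1) * (v:ℕ)] (σ^[(u:ℕ)] x) := by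
        rw [← Function.iterate_add_apply]
      rw [this, he, ← Function.iterate_add_apply]
      have : (n-1) * (v:ℕ) + (v:ℕ) = n * (v:ℕ) := by
        cases n with
        | zero => omega
        | succ n' => simp [Nat.succ_sub_one]; ring
      rw [this, h1]
    have d1 := h1.minimalPeriod_dvd
    have d2 := h2.minimalPeriod_dvd
    have hsub : n * (v:ℕ) - ((n-1) * (v:ℕ) + (u:ℕ)) = (v:ℕ) - (u:ℕ) := by
      cases n with
      | zero => omega
      | succ n' => simp [Nat.succ_sub_one]; ring_nf; omega
    have d3 : Function.minimalPeriod σ x ∣ (v:ℕ) - (u:ℕ) := by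
      have := Nat.dvd_sub d1 d2
      rwa [hsub] at this
    have : Function.minimalPeriod σ x ≤ (v:ℕ) - (u:ℕ) := Nat.le_of_dvd (by omega) d3
    omega
  rcases Nat.lt_or_ge (a:ℕ) (b:ℕ) with h | h
  · exact main a b h heq
  · exact main b a (by omega) heq.symm


/-- the Jacobian-type matrix of `f` at `Q` -/
noncomputable def AM {N : ℕ} (f : Fin N → MvPolynomial (Fin N) ℤ) (Q : Fin N → ℤ) :
    Matrix (Fin N) (Fin N) ℤ :=
  Matrix.of fun i j => eval Q (pderiv j (f i))

/-- product of Jacobian matrices along the orbit of `P` -/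
noncomputable def PiM {N : ℕ} (f : Fin N → MvPolynomial (Fin N) ℤ)
    (F : (Fin N → ℤ) → (Fin N → ℤ)) (P : Fin N → ℤ) : ℕ → Matrix (Fin N) (Fin N) ℤ
  | 0 => 1
  | (r+1) => AM f (F^[r] P) * PiM f F P r

lemma step_taylor {N : ℕ} (f : Fin N → MvPolynomial (Fin N) ℤ)
    (F : (Fin N → ℤ) → (Fin N → ℤ))
    (hF : ∀ x, F x = fun i => MvPolynomial.eval x (f i))
    (k : ℕ) (Q x y : Fin N → ℤ)
    (hxy : ∀ i, (3:ℤ)^k ∣ x i - y i) (hx : ∀ i, (27:ℤ) ∣ x i - Q i)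
    (hy : ∀ i, (27:ℤ) ∣ y i - Q i) :
    (∀ i, (3:ℤ)^k ∣ F x i - F y i) ∧
    (∀ i, 27 * (3:ℤ)^k ∣ F x i - F y i - ((AM f Q).mulVec (fun j => x j - y j)) i) := by
  constructor
  · intro i
    rw [hF x, hF y]
    exact dvd_eval_sub _ (f i) x y hxy
  · intro i
    have h := taylor_cong k Q x y hxy hx hy (f i)
    have hmv : ((AM f Q).mulVec (fun j => x j - y j)) i
        = ∑ j, eval Q (pderiv j (f i)) * (x j - y j) := by
      simp [Matrix.mulVec, dotProduct, AM]
    rw [hF x, hF y, hmv]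
    have h27 : (27:ℤ) * 3^k = 3^(k+3) := by ring
    rw [h27]
    exact h

lemma iter_taylor {N : ℕ} (f : Fin N → MvPolynomial (Fin N) ℤ)
    (F : (Fin N → ℤ) → (Fin N → ℤ))
    (hF : ∀ x, F x = fun i => MvPolynomial.eval x (f i))
    (P : Fin N → ℤ) (n₀ : ℕ)
    (hper27 : ∀ r a : ℕ, ∀ i, (27:ℤ) ∣ (F^[r + n₀ * a] P) i - (F^[r] P) i)
    (k a b : ℕ)
    (hxy : ∀ i, (3:ℤ)^k ∣ (F^[n₀*a] P) i - (F^[n₀*b] P) i) :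
    ∀ r : ℕ,
      (∀ i, (3:ℤ)^k ∣ (F^[r] (F^[n₀*a] P)) i - (F^[r] (F^[n₀*b] P)) i) ∧
      (∀ i, 27 * (3:ℤ)^k ∣ (F^[r] (F^[n₀*a] P)) i - (F^[r] (F^[n₀*b] P)) i
          - ((PiM f F P r).mulVec (fun j => (F^[n₀*a] P) j - (F^[n₀*b] P) j)) i) := by
  intro r
  induction r with
  | zero =>
      refine ⟨by simpa using hxy, ?_⟩
      intro i
      simp only [Function.iterate_zero_apply, PiM, Matrix.one_mulVec]
      simp
  | succ r ih =>
      obtain ⟨ih1, ih2⟩ := ih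
      have hxr : ∀ i, (27:ℤ) ∣ (F^[r] (F^[n₀*a] P)) i - (F^[r] P) i := by
        intro i
        have := hper27 r a i
        rwa [Function.iterate_add_apply] at this
      have hyr : ∀ i, (27:ℤ) ∣ (F^[r] (F^[n₀*b] P)) i - (F^[r] P) i := by
        intro i
        have := hper27 r b i
        rwa [Function.iterate_add_apply] at this
      obtain ⟨st1, st2⟩ := step_taylor f F hF k (F^[r] P)
        (F^[r] (F^[n₀*a] P)) (F^[r] (F^[n₀*b] P)) ih1 hxr hyr
      constructor
      · intro i
        rw [Function.iterate_succ_apply', Function.iterate_succ_apply']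
        exact st1 i
      · intro i
        rw [Function.iterate_succ_apply', Function.iterate_succ_apply']
        -- F (xr) i - F (yr) i - PiM (r+1) v i
        -- = [F xr i - F yr i - AM (Q) (xr - yr) i] + [AM Q (xr - yr) i - AM Q (PiM r v) i]
        set xr := F^[r] (F^[n₀*a] P)
        set yr := F^[r] (F^[n₀*b] P)
        set v : Fin N → ℤ := fun j => (F^[n₀*a] P) j - (F^[n₀*b] P) j with hv
        have hPi : ((PiM f F P (r+1)).mulVec v) i
            = ∑ j, AM f (F^[r] P) i j * (((PiM f F P r).mulVec v) j) := by
          rw [show PiM f F P (r+1) = AM f (F^[r] P) * PiM f F P r from rfl,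
            ← Matrix.mulVec_mulVec]
          simp [Matrix.mulVec, dotProduct]
        have hAv : ((AM f (F^[r] P)).mulVec (fun j => xr j - yr j)) i
            = ∑ j, AM f (F^[r] P) i j * (xr j - yr j) := by
          simp [Matrix.mulVec, dotProduct]
        have key : F xr i - F yr i - ((PiM f F P (r+1)).mulVec v) i
            = (F xr i - F yr i - ((AM f (F^[r] P)).mulVec (fun j => xr j - yr j)) i)
              + ∑ j, AM f (F^[r] P) i j * ((xr j - yr j) - ((PiM f F P r).mulVec v) j) := by
          rw [hPi, hAv]
          rw [Finset.sum_congr rfl (fun j _ => mul_sub (AM f (F^[r] P) i j)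
            (xr j - yr j) (((PiM f F P r).mulVec v) j)), Finset.sum_sub_distrib]
          ring
        rw [key]
        refine dvd_add (st2 i) (Finset.dvd_sum ?_)
        intro j _
        exact Dvd.dvd.mul_left (ih2 j) _

noncomputable def PhiM {N : ℕ} : Matrix (Fin N) (Fin N) ℤ →+* Matrix (Fin N) (Fin N) (ZMod 27) :=
  (Int.castRingHom (ZMod 27)).mapMatrix

lemma matCongr_iff {N : ℕ} (U V : Matrix (Fin N) (Fin N) ℤ) :
    PhiM U = PhiM V ↔ ∀ i j, (27:ℤ) ∣ U i j - V i j := by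
  constructor
  · intro h i j
    have : ((U i j : ℤ) : ZMod 27) = ((V i j : ℤ) : ZMod 27) := by
      have := congrArg (fun M => M i j) h
      simpa [PhiM, RingHom.mapMatrix_apply, Matrix.map_apply] using this
    have h0 : (((U i j - V i j : ℤ)) : ZMod 27) = 0 := by
      push_cast
      rw [this]; ring
    exact (ZMod.intCast_zmod_eq_zero_iff_dvd _ 27).mp h0
  · intro h
    ext i j
    simp only [PhiM, RingHom.mapMatrix_apply, Matrix.map_apply, Int.coe_castRingHom]
    have h0 : (((U i j - V i j : ℤ)) : ZMod 27) = 0 :=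
      (ZMod.intCast_zmod_eq_zero_iff_dvd _ 27).mpr (h i j)
    push_cast at h0
    linear_combination h0

lemma block_pow {N : ℕ} (f : Fin N → MvPolynomial (Fin N) ℤ)
    (F : (Fin N → ℤ) → (Fin N → ℤ)) (P : Fin N → ℤ) (n₀ : ℕ)
    (hper27 : ∀ r a : ℕ, ∀ i, (27:ℤ) ∣ (F^[r + n₀ * a] P) i - (F^[r] P) i) :
    ∀ s j : ℕ, PhiM (PiM f F P (n₀ * s + j))
      = PhiM (PiM f F P j) * (PhiM (PiM f F P n₀))^s := by
  have hA : ∀ s j : ℕ, PhiM (AM f (F^[n₀ * s + j] P)) = PhiM (AM f (F^[j] P)) := by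
    intro s j
    rw [matCongr_iff]
    intro i l
    have hp : ∀ i', (27:ℤ) ∣ (F^[n₀ * s + j] P) i' - (F^[j] P) i' := by
      intro i'
      have := hper27 j s i'
      rwa [show j + n₀ * s = n₀ * s + j by ring] at this
    exact dvd_eval_sub 27 _ _ _ hp
  intro s
  induction s with
  | zero => intro j; simp
  | succ s ihs =>
      intro j
      induction j with
      | zero =>
          have e : n₀ * (s+1) + 0 = n₀ * s + n₀ := by ring
          rw [e, ihs n₀, pow_succ']
          rw [show PiM f F P 0 = 1 from rfl]
          simp [mul_assoc]
      | succ j ihj =>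
          have e : n₀ * (s+1) + (j+1) = (n₀ * (s+1) + j) + 1 := by ring
          rw [e]
          rw [show PiM f F P ((n₀ * (s+1) + j) + 1)
              = AM f (F^[n₀ * (s+1) + j] P) * PiM f F P (n₀ * (s+1) + j) from rfl]
          rw [_root_.map_mul, hA (s+1) j, ihj]
          rw [show PiM f F P (j+1) = AM f (F^[j] P) * PiM f F P j from rfl]
          rw [_root_.map_mul, mul_assoc]

/-- For every `N ≥ 1` there is a constant `C = C(N) > 0` bounding the
primitive period of every integral periodic point of every polynomial endomorphism of `𝔸^N`. -/
theorem stmt3 (N : ℕ) (hN : 1 ≤ N) :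
    ∃ C : ℕ, 0 < C ∧
      ∀ (f : Fin N → MvPolynomial (Fin N) ℤ)
        (F : (Fin N → ℤ) → (Fin N → ℤ)),
        (∀ x, F x = fun i => MvPolynomial.eval x (f i)) →
        ∀ P : Fin N → ℤ, (∃ k, 0 < k ∧ F^[k] P = P) →
          Function.minimalPeriod F P ≤ C := by
  classical
  set c : ℕ := (Fintype.card (Matrix (Fin N) (Fin N) (ZMod 27))).factorial with hc
  have hcpos : 0 < c := Nat.factorial_pos _
  refine ⟨27 ^ N * c, by positivity, ?_⟩
  intro f F hF P hper
  obtain ⟨k₁, hk₁pos, hk₁⟩ := hper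
  set n : ℕ := Function.minimalPeriod F P with hn_def
  have hn : 0 < n := (show Function.IsPeriodicPt F k₁ P from hk₁).minimalPeriod_pos hk₁pos
  have hFn : F^[n] P = P := Function.isPeriodicPt_minimalPeriod F P
  -- reduction mod 27
  set π : (Fin N → ℤ) → (Fin N → ZMod 27) := fun x i => ((x i : ℤ) : ZMod 27) with hπ
  set σ : (Fin N → ZMod 27) → (Fin N → ZMod 27) :=
    fun v i => eval v (map (Int.castRingHom (ZMod 27)) (f i)) with hσ
  have hcomm : ∀ x, π (F x) = σ (π x) := by
    intro x; funext i
    show ((F x i : ℤ) : ZMod 27) = _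
    rw [hF x]
    exact cast_eval_comm (f i) x
  have hit : ∀ (t : ℕ) (x : Fin N → ℤ), π (F^[t] x) = σ^[t] (π x) := by
    intro t
    induction t with
    | zero => intro x; simp
    | succ t ih =>
        intro x
        rw [Function.iterate_succ_apply', Function.iterate_succ_apply', hcomm, ih]
  have hσn : σ^[n] (π P) = π P := by rw [← hit, hFn]
  set n₀ : ℕ := Function.minimalPeriod σ (π P) with hn₀_def
  have hn₀dvd : n₀ ∣ n := (show Function.IsPeriodicPt σ n (π P) from hσn).minimalPeriod_dvd
  have hn₀pos : 0 < n₀ := (show Function.IsPeriodicPt σ n (π P) from hσn).minimalPeriod_pos hn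
  have hn₀le : n₀ ≤ 27 ^ N := by
    have := minper_le_card σ (π P) hn hσn
    simpa [Fintype.card_fun, ZMod.card] using this
  have hσper : ∀ a : ℕ, σ^[n₀ * a] (π P) = π P := by
    intro a
    exact (Function.isPeriodicPt_minimalPeriod σ (π P)).mul_const a
  have hper27 : ∀ r a : ℕ, ∀ i, (27:ℤ) ∣ (F^[r + n₀ * a] P) i - (F^[r] P) i := by
    intro r a i
    have hmm : π (F^[r + n₀ * a] P) = π (F^[r] P) := by
      rw [hit, hit, Function.iterate_add_apply, hσper a]
    have hzm : ((F^[r + n₀ * a] P) i : ZMod 27) = ((F^[r] P) i : ZMod 27) :=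
      congrFun hmm i
    have h0 : (((F^[r + n₀ * a] P) i - (F^[r] P) i : ℤ) : ZMod 27) = 0 := by
      push_cast; rw [hzm]; ring
    exact (ZMod.intCast_zmod_eq_zero_iff_dvd _ 27).mp h0
  -- matrices
  set B : Matrix (Fin N) (Fin N) ℤ := PiM f F P n₀ with hB
  set E : Matrix (Fin N) (Fin N) ℤ := B ^ c with hE
  have hpow : ∀ t : ℕ, 1 ≤ t → PhiM (B ^ (c * t)) = PhiM E := by
    intro t ht
    rw [hE, map_pow, map_pow]
    exact pow_factorial_absorb (PhiM B) ht
  have hidem : PhiM E * PhiM E = PhiM E := by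
    have h2 : PhiM (B ^ (c * 2)) = PhiM E := hpow 2 (by norm_num)
    have h3 : B ^ (c * 2) = B ^ c * B ^ c := by rw [← pow_add]; congr 1; ring
    rw [h3, _root_.map_mul, hE] at h2
    exact h2
  -- periods
  set m : ℕ := Function.minimalPeriod (F^[n₀]) P with hm_def
  have hm_eq : m = n / n₀ := by
    rw [hm_def, Function.minimalPeriod_iterate_eq_div_gcd (Nat.pos_iff_ne_zero.mp hn₀pos)]
    rw [← hn_def, Nat.gcd_eq_right hn₀dvd]
  have hnm : n = n₀ * m := by rw [hm_eq]; exact (Nat.mul_div_cancel' hn₀dvd).symm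
  have hmpos : 0 < m := by
    rcases Nat.eq_zero_or_pos m with h | h
    · rw [h, Nat.mul_zero] at hnm; omega
    · exact h
  set m' : ℕ := Function.minimalPeriod ((F^[n₀])^[c]) P with hm'_def
  have hm'_eq : m' = m / Nat.gcd m c := by
    rw [hm'_def, Function.minimalPeriod_iterate_eq_div_gcd (Nat.pos_iff_ne_zero.mp hcpos), hm_def]
  have hm'pos : 0 < m' := by
    have hper' : Function.IsPeriodicPt ((F^[n₀])^[c]) n P := by
      show ((F^[n₀])^[c])^[n] P = P
      rw [← Function.iterate_mul, ← Function.iterate_mul]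
      have harith : n₀ * (c * n) = n * (n₀ * c) := by ring
      rw [harith]
      exact (show Function.IsPeriodicPt F n P from hFn).mul_const (n₀ * c)
    exact hper'.minimalPeriod_pos hn
  -- main claim : m' = 1
  have hm'1 : m' = 1 := by
    by_contra hne
    set ℓ : ℕ := m'.minFac with hℓ_def
    have hℓp : ℓ.Prime := Nat.minFac_prime hne
    have hℓ2 : 2 ≤ ℓ := hℓp.two_le
    set t : ℕ := m' / ℓ with ht_def
    have htdvd : t ∣ m' := Nat.div_dvd_of_dvd m'.minFac_dvd
    have ht1 : 1 ≤ t := Nat.div_pos (Nat.minFac_le hm'pos) hℓp.pos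
    set T : (Fin N → ℤ) → (Fin N → ℤ) := F^[n₀ * (c * t)] with hT_def
    have hTeq : T = ((F^[n₀])^[c])^[t] := by
      rw [hT_def, Function.iterate_mul, Function.iterate_mul]
    have hTper : Function.minimalPeriod T P = ℓ := by
      rw [hTeq, Function.minimalPeriod_iterate_eq_div_gcd (Nat.pos_iff_ne_zero.mp ht1), ← hm'_def]
      rw [Nat.gcd_eq_right htdvd, ht_def]
      exact Nat.div_div_self m'.minFac_dvd (Nat.pos_iff_ne_zero.mp hm'pos)
    -- the cycle of T
    set z : ℕ → (Fin N → ℤ) := fun j => T^[j] P with hz_def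
    have hz_form : ∀ j : ℕ, z j = F^[n₀ * (c * t * j)] P := by
      intro j
      show T^[j] P = _
      rw [hT_def, ← Function.iterate_mul]
      congr 1
      ring
    set d : ℕ → Fin N → ℤ := fun j i => z (j+1) i - z j i with hd_def
    have hz0 : z 0 = P := rfl
    have hzl : z ℓ = P := by
      show T^[ℓ] P = P
      rw [← hTper]
      exact Function.isPeriodicPt_minimalPeriod T P
    have hzl1 : z (ℓ+1) = z 1 := by
      show T^[ℓ+1] P = T^[1] P
      rw [Function.iterate_succ_apply']
      show T (z ℓ) = _
      rw [hzl]
      simp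
    have hdwrap : ∀ i, d ℓ i = d 0 i := by
      intro i
      show z (ℓ+1) i - z ℓ i = z 1 i - z 0 i
      rw [hzl1, hzl, hz0]
    have hz1ne : ∃ i, d 0 i ≠ 0 := by
      by_contra hcon
      push_neg at hcon
      have hz10 : z 1 = z 0 := by
        funext i
        have := hcon i
        have h2 : z 1 i - z 0 i = 0 := this
        linarith
      have h1 : Function.IsPeriodicPt T 1 P := by
        show T^[1] P = P
        have : T^[1] P = z 1 := by simp [hz_def]
        rw [this, hz10, hz0]
      have hdvd1 := h1.minimalPeriod_dvd
      rw [hTper] at hdvd1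
      exact absurd (Nat.le_of_dvd one_pos hdvd1) (by omega)
    obtain ⟨iw, hiw⟩ := hz1ne
    have hex : ∃ k : ℕ, ¬ ∀ j, j < ℓ → ∀ i, (3:ℤ)^(k+1) ∣ d j i := by
      refine ⟨(d 0 iw).natAbs, ?_⟩
      intro hall
      have hdvd := hall 0 (by omega) iw
      have hnat : 3^((d 0 iw).natAbs + 1) ∣ (d 0 iw).natAbs := by
        have := Int.natAbs_dvd_natAbs.mpr hdvd
        simpa [Int.natAbs_pow] using this
      have hle : 3^((d 0 iw).natAbs + 1) ≤ (d 0 iw).natAbs :=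
        Nat.le_of_dvd (Int.natAbs_pos.mpr hiw) hnat
      have hlt : (d 0 iw).natAbs < 3^((d 0 iw).natAbs + 1) := by
        calc (d 0 iw).natAbs < 3^((d 0 iw).natAbs) := Nat.lt_pow_self (by norm_num)
          _ ≤ 3^((d 0 iw).natAbs + 1) := Nat.pow_le_pow_right (by norm_num) (by omega)
      omega
    obtain ⟨e, hespec0, hemin⟩ : ∃ e : ℕ, (¬ ∀ j, j < ℓ → ∀ i, (3:ℤ)^(e+1) ∣ d j i) ∧
        (∀ k, k < e → ∀ j, j < ℓ → ∀ i, (3:ℤ)^(k+1) ∣ d j i) := by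
      refine ⟨Nat.find hex, Nat.find_spec hex, ?_⟩
      intro k hk
      exact not_not.mp (Nat.find_min hex hk)
    push_neg at hespec0
    obtain ⟨j₀, hj₀, i₀, hnd⟩ := hespec0
    have hde : ∀ j, j < ℓ → ∀ i, (3:ℤ)^e ∣ d j i := by
      rcases Nat.eq_zero_or_pos e with h0 | hpos
      · intro j hj i; rw [h0]; simp
      · intro j hj i
        have := hemin (e-1) (by omega) j hj i
        rwa [show e - 1 + 1 = e by omega] at this
    have hde' : ∀ j, j ≤ ℓ → ∀ i, (3:ℤ)^e ∣ d j i := by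
      intro j hj i
      rcases Nat.lt_or_ge j ℓ with h | h
      · exact hde j h i
      · have hjeq : j = ℓ := by omega
        rw [hjeq, hdwrap i]
        exact hde 0 (by omega) i
    set δ : ℕ → Fin N → ℤ := fun j i => d j i / (3:ℤ)^e with hδ_def
    have hdδ : ∀ j, j ≤ ℓ → ∀ i, d j i = 3^e * δ j i :=
      fun j hj i => (Int.mul_ediv_cancel' (hde' j hj i)).symm
    have hδwrap : ∀ i, δ ℓ i = δ 0 i := by
      intro i
      show d ℓ i / (3:ℤ)^e = d 0 i / (3:ℤ)^e
      rw [hdwrap i]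
    have hPiE : ∀ i j, (27:ℤ) ∣ (PiM f F P (n₀ * (c * t))) i j - E i j := by
      rw [← matCongr_iff]
      have hb := block_pow f F P n₀ hper27 (c * t) 0
      simp only [Nat.add_zero] at hb
      rw [hb, show PiM f F P 0 = 1 from rfl, _root_.map_one, one_mul, ← hB, ← _root_.map_pow]
      exact hpow t ht1
    have hstepδ : ∀ j, j < ℓ → ∀ i, (27:ℤ) ∣ δ (j+1) i - (E.mulVec (δ j)) i := by
      intro j hj i
      have hxy : ∀ i', (3:ℤ)^e ∣ (F^[n₀*(c*t*(j+1))] P) i' - (F^[n₀*(c*t*j)] P) i' := by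
        intro i'
        rw [← hz_form (j+1), ← hz_form j]
        exact hde j hj i'
      have hit2 := (iter_taylor f F hF P n₀ hper27 e (c*t*(j+1)) (c*t*j) hxy (n₀*(c*t))).2 i
      have hxz : F^[n₀*(c*t)] (F^[n₀*(c*t*(j+1))] P) = z (j+2) := by
        rw [← Function.iterate_add_apply, hz_form (j+2)]
        congr 1
        ring
      have hyz : F^[n₀*(c*t)] (F^[n₀*(c*t*j)] P) = z (j+1) := by
        rw [← Function.iterate_add_apply, hz_form (j+1)]
        congr 1
        ring
      rw [hxz, hyz, ← hz_form (j+1), ← hz_form j] at hit2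
      have hdj : (fun l => z (j+1) l - z j l) = d j := rfl
      rw [hdj] at hit2
      -- hit2 : 27*3^e ∣ z (j+2) i - z (j+1) i - ((PiM ..).mulVec (d j)) i
      have h1 : (27:ℤ) * 3^e ∣ d (j+1) i - (E.mulVec (d j)) i := by
        have hsplit : d (j+1) i - (E.mulVec (d j)) i
            = (z (j+2) i - z (j+1) i - ((PiM f F P (n₀*(c*t))).mulVec (d j)) i)
              + ∑ l, ((PiM f F P (n₀*(c*t))) i l - E i l) * d j l := by
          have hm1 : ((PiM f F P (n₀*(c*t))).mulVec (d j)) i = ∑ l, (PiM f F P (n₀*(c*t))) i l * d j l := by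
            simp [Matrix.mulVec, dotProduct]
          have hm2 : (E.mulVec (d j)) i = ∑ l, E i l * d j l := by
            simp [Matrix.mulVec, dotProduct]
          have hd1 : d (j+1) i = z (j+2) i - z (j+1) i := rfl
          rw [hm1, hm2, hd1]
          rw [Finset.sum_congr rfl (fun l _ => sub_mul ((PiM f F P (n₀*(c*t))) i l) (E i l) (d j l)),
            Finset.sum_sub_distrib]
          ring
        rw [hsplit]
        refine dvd_add hit2 (Finset.dvd_sum ?_)
        intro l _
        exact mul_dvd_mul (hPiE i l) (hde j hj l)
      have h2 : d (j+1) i - (E.mulVec (d j)) i = 3^e * (δ (j+1) i - (E.mulVec (δ j)) i) := by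
        have hmv : (E.mulVec (d j)) i = 3^e * (E.mulVec (δ j)) i := by
          have hm2 : (E.mulVec (d j)) i = ∑ l, E i l * d j l := by
            simp [Matrix.mulVec, dotProduct]
          have hm3 : (E.mulVec (δ j)) i = ∑ l, E i l * δ j l := by
            simp [Matrix.mulVec, dotProduct]
          rw [hm2, hm3, Finset.mul_sum]
          apply Finset.sum_congr rfl
          intro l _
          rw [hdδ j (by omega) l]
          ring
        rw [hmv, hdδ (j+1) (by omega) i]
        ring
      have h3 : (3:ℤ)^e * 27 ∣ 3^e * (δ (j+1) i - (E.mulVec (δ j)) i) := by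
        rw [← h2, mul_comm ((3:ℤ)^e) 27]
        exact h1
      exact (mul_dvd_mul_iff_left (pow_ne_zero e (by norm_num : (3:ℤ) ≠ 0))).mp h3
    -- δ j ≡ E^j δ 0 mod 27
    have hδpow : ∀ j, j ≤ ℓ → ∀ i, (27:ℤ) ∣ δ j i - ((E^j).mulVec (δ 0)) i := by
      intro j
      induction j with
      | zero =>
          intro _ i
          simp [Matrix.one_mulVec]
      | succ j ih =>
          intro hj i
          have ihh := ih (by omega)
          have hEE : E.mulVec ((E^j).mulVec (δ 0)) = (E^(j+1)).mulVec (δ 0) := by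
            rw [Matrix.mulVec_mulVec, ← pow_succ']
          have hsplit : δ (j+1) i - ((E^(j+1)).mulVec (δ 0)) i
              = (δ (j+1) i - (E.mulVec (δ j)) i)
                + ∑ l, E i l * (δ j l - ((E^j).mulVec (δ 0)) l) := by
            rw [← hEE]
            have hm1 : (E.mulVec (δ j)) i = ∑ l, E i l * δ j l := by
              simp [Matrix.mulVec, dotProduct]
            have hm2 : (E.mulVec ((E^j).mulVec (δ 0))) i = ∑ l, E i l * ((E^j).mulVec (δ 0)) l := by
              simp [Matrix.mulVec, dotProduct]
            rw [hm1, hm2]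
            rw [Finset.sum_congr rfl (fun l _ => mul_sub (E i l) (δ j l) (((E^j).mulVec (δ 0)) l)),
              Finset.sum_sub_distrib]
            ring
          rw [hsplit]
          refine dvd_add (hstepδ j (by omega) i) (Finset.dvd_sum ?_)
          intro l _
          exact Dvd.dvd.mul_left (ihh l) _
    -- E^ℓ ≡ E mod 27
    have hEl : ∀ i l, (27:ℤ) ∣ (E^ℓ) i l - E i l := by
      rw [← matCongr_iff]
      rw [_root_.map_pow]
      have := idem_pow hidem (show 1 ≤ ℓ by omega)
      exact this
    -- δ 0 ≡ E δ 0
    have hfix : ∀ i, (27:ℤ) ∣ δ 0 i - (E.mulVec (δ 0)) i := by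
      intro i
      have h1 := hδpow ℓ (le_refl ℓ) i
      have hsplit : δ 0 i - (E.mulVec (δ 0)) i
          = (δ ℓ i - ((E^ℓ).mulVec (δ 0)) i)
            + ∑ l, ((E^ℓ) i l - E i l) * δ 0 l := by
        have hm1 : ((E^ℓ).mulVec (δ 0)) i = ∑ l, (E^ℓ) i l * δ 0 l := by
          simp [Matrix.mulVec, dotProduct]
        have hm2 : (E.mulVec (δ 0)) i = ∑ l, E i l * δ 0 l := by
          simp [Matrix.mulVec, dotProduct]
        rw [hm1, hm2, hδwrap i]
        rw [Finset.sum_congr rfl (fun l _ => sub_mul ((E^ℓ) i l) (E i l) (δ 0 l)),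
          Finset.sum_sub_distrib]
        ring
      rw [hsplit]
      refine dvd_add h1 (Finset.dvd_sum ?_)
      intro l _
      exact Dvd.dvd.mul_right (hEl i l) _
    -- all δ j ≡ δ 0 mod 27
    have hall : ∀ j, j ≤ ℓ → ∀ i, (27:ℤ) ∣ δ j i - δ 0 i := by
      intro j
      induction j with
      | zero => intro _ i; simp
      | succ j ih =>
          intro hj i
          have ihh := ih (by omega)
          have hsplit : δ (j+1) i - δ 0 i
              = (δ (j+1) i - (E.mulVec (δ j)) i)
                + ∑ l, E i l * (δ j l - δ 0 l)
                - (δ 0 i - (E.mulVec (δ 0)) i) := by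
            have hm1 : (E.mulVec (δ j)) i = ∑ l, E i l * δ j l := by
              simp [Matrix.mulVec, dotProduct]
            have hm2 : (E.mulVec (δ 0)) i = ∑ l, E i l * δ 0 l := by
              simp [Matrix.mulVec, dotProduct]
            rw [hm1, hm2]
            rw [Finset.sum_congr rfl (fun l _ => mul_sub (E i l) (δ j l) (δ 0 l)),
              Finset.sum_sub_distrib]
            ring
          rw [hsplit]
          refine dvd_sub (dvd_add (hstepδ j (by omega) i) (Finset.dvd_sum ?_)) (hfix i)
          intro l _
          exact Dvd.dvd.mul_left (ihh l) _
    -- the sum of the δ's vanishes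
    have hsum0 : ∑ j ∈ Finset.range ℓ, δ j i₀ = 0 := by
      have hsd : ∑ j ∈ Finset.range ℓ, d j i₀ = 0 := by
        have htel := Finset.sum_range_sub (fun j => z j i₀) ℓ
        have : ∑ j ∈ Finset.range ℓ, d j i₀ = z ℓ i₀ - z 0 i₀ := htel
        rw [this, hzl, hz0]
        ring
      have hfac : ∑ j ∈ Finset.range ℓ, d j i₀ = 3^e * ∑ j ∈ Finset.range ℓ, δ j i₀ := by
        rw [Finset.mul_sum]
        apply Finset.sum_congr rfl
        intro j hj
        exact hdδ j (le_of_lt (Finset.mem_range.mp hj)) i₀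
      rw [hfac] at hsd
      exact (mul_eq_zero.mp hsd).resolve_left (pow_ne_zero _ (by norm_num))
    have hnd3 : ¬ (3:ℤ) ∣ δ j₀ i₀ := by
      intro h3
      apply hnd
      rw [hdδ j₀ (le_of_lt hj₀) i₀, pow_succ]
      exact mul_dvd_mul_left ((3:ℤ)^e) h3
    have hnd0 : ¬ (3:ℤ) ∣ δ 0 i₀ := by
      intro h3
      apply hnd3
      have h27 := hall j₀ (le_of_lt hj₀) i₀
      have hdd : (3:ℤ) ∣ δ j₀ i₀ - δ 0 i₀ := dvd_trans (by norm_num) h27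
      have : δ j₀ i₀ = (δ j₀ i₀ - δ 0 i₀) + δ 0 i₀ := by ring
      rw [this]
      exact dvd_add hdd h3
    have h27ℓ : (27:ℤ) ∣ (ℓ:ℤ) * δ 0 i₀ := by
      have hid : (ℓ:ℤ) * δ 0 i₀
          = (∑ j ∈ Finset.range ℓ, δ j i₀) - ∑ j ∈ Finset.range ℓ, (δ j i₀ - δ 0 i₀) := by
        rw [Finset.sum_sub_distrib, Finset.sum_const, Finset.card_range]
        push_cast
        ring
      rw [hid, hsum0, zero_sub]
      exact dvd_neg.mpr (Finset.dvd_sum fun j hj => hall j (le_of_lt (Finset.mem_range.mp hj)) i₀)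
    by_cases h3ℓ : (3:ℕ) ∣ ℓ
    · have hℓ3 : ℓ = 3 := ((Nat.prime_dvd_prime_iff_eq Nat.prime_three hℓp).mp h3ℓ).symm
      rw [hℓ3] at h27ℓ
      have h9 : (9:ℤ) ∣ δ 0 i₀ := by
        obtain ⟨w, hw⟩ := h27ℓ
        refine ⟨w, ?_⟩
        push_cast at hw
        linarith
      exact hnd0 (dvd_trans (by norm_num) h9)
    · have h3u : (3:ℤ) ∣ (ℓ:ℤ) * δ 0 i₀ := dvd_trans (by norm_num) h27ℓ
      rcases (Int.Prime.dvd_mul' Nat.prime_three (by exact_mod_cast h3u)) with h | h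
      · exact h3ℓ (by exact_mod_cast h)
      · exact hnd0 (by exact_mod_cast h)
  -- conclusion from m' = 1
  have hgdvd : Nat.gcd m c ∣ m := Nat.gcd_dvd_left m c
  have hmg : m = Nat.gcd m c := by
    have hmc := Nat.mul_div_cancel' hgdvd
    rw [← hm'_eq, hm'1, mul_one] at hmc
    exact hmc.symm
  have hmdvd : m ∣ c := hmg ▸ Nat.gcd_dvd_right m c
  have hmle : m ≤ c := Nat.le_of_dvd hcpos hmdvd
  calc n = n₀ * m := hnm
    _ ≤ 27^N * c := Nat.mul_le_mul hn₀le hmle
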